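/- arXiv:2004.03342 — 3 statements merged into one kernel-verified Lean document; each statement's English description precedes it below -/
import Mathlib

section
/- For any positive integers k and Δ with 3 ≤ k ≤ Δ, and any real numbers x_1, ..., x_k with 1 ≤ x_j ≤ Δ for all j, we have (2/(k-1)) · Σ_{1≤i<j≤k} 1/(x_i + x_j + 2k - 4) ≤ Σ_{j=1}^k 1/(x_j + k). -/
open Finset

lemma pair_sum {n : ℕ} (f : Fin n → ℝ) :
    ∑ p ∈ Finset.univ.filter (fun p : Fin n × Fin n => p.1 < p.2), (f p.1 + f p.2)
      = ((n:ℝ) - 1) * ∑ j, f j := by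
  classical
  have h1 : ∑ p ∈ Finset.univ.filter (fun p : Fin n × Fin n => p.1 < p.2), f p.2
      = ∑ p ∈ Finset.univ.filter (fun p : Fin n × Fin n => p.2 < p.1), f p.1 := by
    apply Finset.sum_nbij' (fun p => Prod.swap p) (fun p => Prod.swap p) <;>
      simp [Finset.mem_filter]
  rw [Finset.sum_add_distrib, h1]
  have hdisj : Disjoint (Finset.univ.filter (fun p : Fin n × Fin n => p.1 < p.2))
      (Finset.univ.filter (fun p : Fin n × Fin n => p.2 < p.1)) := by
    rw [Finset.disjoint_filter]
    intro p _ h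
    exact fun h2 => absurd h2 (not_lt.2 h.le)
  have hunion : (Finset.univ.filter (fun p : Fin n × Fin n => p.1 < p.2)) ∪
      (Finset.univ.filter (fun p : Fin n × Fin n => p.2 < p.1))
      = Finset.univ.filter (fun p : Fin n × Fin n => p.1 ≠ p.2) := by
    ext p
    simp only [Finset.mem_union, Finset.mem_filter, Finset.mem_univ, true_and]
    exact lt_or_lt_iff_ne
  rw [← Finset.sum_union hdisj, hunion]
  have h2 : ∑ p ∈ Finset.univ.filter (fun p : Fin n × Fin n => p.1 ≠ p.2), f p.1
      + ∑ p ∈ Finset.univ.filter (fun p : Fin n × Fin n => ¬ p.1 ≠ p.2), f p.1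
      = ∑ p : Fin n × Fin n, f p.1 := Finset.sum_filter_add_sum_filter_not _ _ _
  have h3 : ∑ p ∈ Finset.univ.filter (fun p : Fin n × Fin n => ¬ p.1 ≠ p.2), f p.1
      = ∑ j, f j := by
    apply Finset.sum_nbij' (fun p => p.1) (fun i => (i, i)) <;>
      simp +contextual [Finset.mem_filter, eq_comm]
  have h4 : ∑ p : Fin n × Fin n, f p.1 = (n:ℝ) * ∑ j, f j := by
    rw [Fintype.sum_prod_type]
    simp [Finset.sum_const, mul_comm, Finset.mul_sum]
    rw [Finset.sum_mul]
  have := h2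
  rw [h3, h4] at this
  linarith [this]

theorem stmt0 (k Δ : ℕ) (hk : 3 ≤ k) (hkΔ : k ≤ Δ) (x : Fin k → ℝ)
    (hx : ∀ j, 1 ≤ x j ∧ x j ≤ (Δ : ℝ)) :
    (2 / ((k : ℝ) - 1)) *
        ∑ p ∈ Finset.univ.filter (fun p : Fin k × Fin k => p.1 < p.2),
          1 / (x p.1 + x p.2 + 2 * (k : ℝ) - 4)
      ≤ ∑ j, 1 / (x j + (k : ℝ)) := by
  have hk3 : (3:ℝ) ≤ (k:ℝ) := by exact_mod_cast hk
  have hkpos : (0:ℝ) < (k:ℝ) - 1 := by linarith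
  have hbound : ∀ p ∈ Finset.univ.filter (fun p : Fin k × Fin k => p.1 < p.2),
      1 / (x p.1 + x p.2 + 2 * (k : ℝ) - 4)
        ≤ (1/2) * (1/(x p.1 + (k:ℝ)) + 1/(x p.2 + (k:ℝ))) := by
    intro p _
    have h1 := (hx p.1).1
    have h2 := (hx p.2).1
    set a := x p.1 + (k:ℝ) with ha
    set b := x p.2 + (k:ℝ) with hb
    have ha4 : 4 ≤ a := by simp [ha]; linarith
    have hb4 : 4 ≤ b := by simp [hb]; linarith
    have hab : x p.1 + x p.2 + 2*(k:ℝ) - 4 = a + b - 4 := by ring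
    rw [hab]
    have hden : (0:ℝ) < a + b - 4 := by linarith
    have hapos : (0:ℝ) < a := by linarith
    have hbpos : (0:ℝ) < b := by linarith
    have key : 0 ≤ a*(a-4) + b*(b-4) := by nlinarith
    have heq : (1/2) * (1/a + 1/b) - 1/(a+b-4)
        = (a*(a-4) + b*(b-4)) / (2*(a*b)*(a+b-4)) := by
      field_simp
      ring
    have hnn : 0 ≤ (a*(a-4) + b*(b-4)) / (2*(a*b)*(a+b-4)) :=
      div_nonneg key (by positivity)
    linarith [heq ▸ hnn]
  have hsum := Finset.sum_le_sum hbound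
  have hps := pair_sum (fun j => (1/2) * (1/(x j + (k:ℝ))))
  simp only [← mul_add] at hps
  calc (2 / ((k : ℝ) - 1)) *
        ∑ p ∈ Finset.univ.filter (fun p : Fin k × Fin k => p.1 < p.2),
          1 / (x p.1 + x p.2 + 2 * (k : ℝ) - 4)
      ≤ (2 / ((k : ℝ) - 1)) *
        ∑ p ∈ Finset.univ.filter (fun p : Fin k × Fin k => p.1 < p.2),
          (1/2) * (1/(x p.1 + (k:ℝ)) + 1/(x p.2 + (k:ℝ))) := by
        apply mul_le_mul_of_nonneg_left hsum
        positivity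
    _ = (2 / ((k : ℝ) - 1)) * (((k:ℝ) - 1) * ∑ j, (1/2) * (1/(x j + (k:ℝ)))) := by
        rw [hps]
    _ = (2/((k:ℝ)-1) * (((k:ℝ)-1) * (1/2))) * ∑ j, 1/(x j + (k:ℝ)) := by
        rw [← Finset.mul_sum]
        ring
    _ = ∑ j, 1/(x j + (k:ℝ)) := by
        rw [show 2/((k:ℝ)-1) * (((k:ℝ)-1) * (1/2)) = 1 by field_simp, one_mul]
end

section
/- For any positive integers k and Δ with 3 ≤ k ≤ Δ, and any real numbers x_1, ..., x_k with 1 ≤ x_j ≤ Δ for all j, we have Σ_{j=1}^k 1/(x_j + k) ≤ ((Δ + 3)/4) · Σ_{1≤i<j≤k} 1/(x_i + x_j + 2k - 4). -/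
theorem keyF (D K a b : ℝ) (h3 : 3 ≤ K) (hKD : K ≤ D)
    (ha1 : K + 1 ≤ a) (ha2 : a ≤ D + K) (hb1 : K + 1 ≤ b) (hb2 : b ≤ D + K) :
    4 * (a + b) * (a + b - 4) ≤ (D + 3) * (K - 1) * (a * b) := by
  have hmm : 0 ≤ (D+3)*(K-1)*((K+1)*(K+1)) - 4*((K+1)+(K+1))*((K+1)+(K+1)-4) := by
    nlinarith [mul_nonneg (sub_nonneg.2 h3) (sub_nonneg.2 hKD), sq_nonneg (K-3), sq_nonneg (D-K)]
  have hmM : 0 ≤ (D+3)*(K-1)*((K+1)*(D+K)) - 4*((K+1)+(D+K))*((K+1)+(D+K)-4) := by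
    nlinarith [mul_nonneg (sub_nonneg.2 h3) (sub_nonneg.2 hKD), sq_nonneg (K-3), sq_nonneg (D-K),
      sq_nonneg (D-1), mul_nonneg (sub_nonneg.2 h3) (sub_nonneg.2 h3)]
  have hMM : 0 ≤ (D+3)*(K-1)*((D+K)*(D+K)) - 4*((D+K)+(D+K))*((D+K)+(D+K)-4) := by
    nlinarith [mul_nonneg (sub_nonneg.2 h3) (sub_nonneg.2 hKD), sq_nonneg (D-1), sq_nonneg (D-K),
      mul_nonneg (sub_nonneg.2 h3) (sub_nonneg.2 h3)]
  have hu := sub_nonneg.2 ha1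
  have hU := sub_nonneg.2 ha2
  have hv := sub_nonneg.2 hb1
  have hV := sub_nonneg.2 hb2
  have hD1 : (0:ℝ) < D - 1 := by linarith
  have hD : (0:ℝ) < (D-1)^2 := by positivity
  rw [← sub_nonneg, ← mul_nonneg_iff_of_pos_right hD]
  have hident : ((D + 3) * (K - 1) * (a * b) - 4 * (a + b) * (a + b - 4)) * (D-1)^2 =
      ((D+K)-a)*((D+K)-b)*((D+3)*(K-1)*((K+1)*(K+1)) - 4*((K+1)+(K+1))*((K+1)+(K+1)-4))
      + ((D+K)-a)*(b-(K+1))*((D+3)*(K-1)*((K+1)*(D+K)) - 4*((K+1)+(D+K))*((K+1)+(D+K)-4))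
      + (a-(K+1))*((D+K)-b)*((D+3)*(K-1)*((K+1)*(D+K)) - 4*((K+1)+(D+K))*((K+1)+(D+K)-4))
      + (a-(K+1))*(b-(K+1))*((D+3)*(K-1)*((D+K)*(D+K)) - 4*((D+K)+(D+K))*((D+K)+(D+K)-4))
      + 4*(b-(K+1))*((D+K)-b)*(D-1)^2 + 4*(a-(K+1))*((D+K)-a)*(D-1)^2 := by ring
  rw [hident]
  have := mul_nonneg (mul_nonneg hU hV) hmm
  have := mul_nonneg (mul_nonneg hU hv) hmM
  have := mul_nonneg (mul_nonneg hu hV) hmM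
  have := mul_nonneg (mul_nonneg hu hv) hMM
  have := mul_nonneg (mul_nonneg (by linarith : (0:ℝ) ≤ 4*(b-(K+1))) hV) hD.le
  have := mul_nonneg (mul_nonneg (by linarith : (0:ℝ) ≤ 4*(a-(K+1))) hU) hD.le
  linarith [mul_assoc (4*(b-(K+1))) ((D+K)-b) ((D-1)^2), mul_assoc (4*(a-(K+1))) ((D+K)-a) ((D-1)^2)]

theorem keyPair (D K a b : ℝ) (h3 : 3 ≤ K) (hKD : K ≤ D)
    (ha1 : K + 1 ≤ a) (ha2 : a ≤ D + K) (hb1 : K + 1 ≤ b) (hb2 : b ≤ D + K) :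
    1 / a + 1 / b ≤ (D + 3) * (K - 1) / 4 * (1 / (a + b - 4)) := by
  have ha0 : (0:ℝ) < a := by linarith
  have hb : (0:ℝ) < b := by linarith
  have hs : (0:ℝ) < a + b - 4 := by linarith
  have h := keyF D K a b h3 hKD ha1 ha2 hb1 hb2
  rw [div_add_div _ _ (ne_of_gt ha0) (ne_of_gt hb), div_mul_div_comm,
    div_le_div_iff₀ (by positivity) (by positivity)]
  nlinarith [h]

theorem stmt2 (k Δ : ℕ) (hk : 3 ≤ k) (hkΔ : k ≤ Δ) (x : Fin k → ℝ)
    (hx : ∀ j, 1 ≤ x j ∧ x j ≤ (Δ : ℝ)) :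
    ∑ j, 1 / (x j + (k : ℝ))
      ≤ ((Δ : ℝ) + 3) / 4 *
        ∑ p ∈ Finset.univ.filter (fun p : Fin k × Fin k => p.1 < p.2),
          1 / (x p.1 + x p.2 + 2 * (k : ℝ) - 4) := by
  set K : ℝ := (k : ℝ) with hK
  set D : ℝ := (Δ : ℝ) with hD
  have h3 : 3 ≤ K := by rw [hK]; exact_mod_cast hk
  have hKD : K ≤ D := by rw [hK, hD]; exact_mod_cast hkΔ
  set f : Fin k → ℝ := fun j => 1 / (x j + K) with hf
  set P := Finset.univ.filter (fun p : Fin k × Fin k => p.1 < p.2) with hP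
  -- Step B : ∑ p in P, (f p.1 + f p.2) = (k-1) * ∑ f
  have hB : ∑ p ∈ P, (f p.1 + f p.2) = ((k - 1 : ℕ) : ℝ) * ∑ j, f j := by
    rw [hP, Finset.sum_filter, Fintype.sum_prod_type]
    have hsplit : ∀ i j : Fin k, (if i < j then f i + f j else 0)
        = (if i < j then f i else 0) + (if i < j then f j else 0) := by
      intro i j; split <;> simp
    simp_rw [hsplit, Finset.sum_add_distrib]
    have h1 : ∀ i : Fin k, (∑ j : Fin k, if i < j then f i else 0)
        = ((k - 1 - (i : ℕ) : ℕ) : ℝ) * f i := by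
      intro i
      rw [← Finset.sum_filter, Finset.sum_const, Finset.filter_lt_eq_Ioi, Fin.card_Ioi,
        nsmul_eq_mul]
    have h2 : (∑ i : Fin k, ∑ j : Fin k, if i < j then f j else 0)
        = ∑ j : Fin k, ((j : ℕ) : ℝ) * f j := by
      rw [Finset.sum_comm]
      refine Finset.sum_congr rfl fun j _ => ?_
      rw [← Finset.sum_filter, Finset.sum_const, Finset.filter_gt_eq_Iio, Fin.card_Iio,
        nsmul_eq_mul]
    simp_rw [h1]
    rw [h2, ← Finset.sum_add_distrib, Finset.mul_sum]
    refine Finset.sum_congr rfl fun i _ => ?_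
    have : ((k - 1 - (i : ℕ) : ℕ) : ℝ) + ((i : ℕ) : ℝ) = ((k - 1 : ℕ) : ℝ) := by
      have := i.isLt
      push_cast [Nat.sub_sub]
      rw [Nat.cast_sub (by omega), Nat.cast_sub (by omega)]
      push_cast; ring
    rw [← add_mul, this]
  -- Step A+C : pairwise bound summed
  have hC : ∑ p ∈ P, (f p.1 + f p.2)
      ≤ (D + 3) * (K - 1) / 4 * ∑ p ∈ P, 1 / (x p.1 + x p.2 + 2 * K - 4) := by
    rw [Finset.mul_sum]
    refine Finset.sum_le_sum fun p _ => ?_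
    have hx1 := hx p.1
    have hx2 := hx p.2
    have := keyPair D K (x p.1 + K) (x p.2 + K) h3 hKD (by linarith [hx1.1])
      (by linarith [hx1.2]) (by linarith [hx2.1]) (by linarith [hx2.2])
    have harg : x p.1 + K + (x p.2 + K) - 4 = x p.1 + x p.2 + 2 * K - 4 := by ring
    rw [harg] at this
    exact this
  have hk1 : (0:ℝ) < K - 1 := by linarith
  have hcast : ((k - 1 : ℕ) : ℝ) = K - 1 := by
    rw [Nat.cast_sub (by omega)]; simp [hK]
  rw [hcast] at hB
  have : (K - 1) * ∑ j, f j ≤ (K - 1) * ((D + 3) / 4 * ∑ p ∈ P, 1 / (x p.1 + x p.2 + 2 * K - 4)) := by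
    rw [← hB]
    calc ∑ p ∈ P, (f p.1 + f p.2)
        ≤ (D + 3) * (K - 1) / 4 * ∑ p ∈ P, 1 / (x p.1 + x p.2 + 2 * K - 4) := hC
      _ = (K - 1) * ((D + 3) / 4 * ∑ p ∈ P, 1 / (x p.1 + x p.2 + 2 * K - 4)) := by ring
  exact le_of_mul_le_mul_left this hk1
end

section
/- If G is a finite simple graph with n vertices (each vertex having degree at least 1), then the harmonic index satisfies H(G) ≤ n/2, with equality if and only if every connected component of G is regular. -/
open Finset SimpleGraph

section Aux

variable {V : Type*} [Fintype V] [DecidableEq V] (G : SimpleGraph V) [DecidableRel G.Adj]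

lemma aux_dart_sum (f : V → V → ℝ) (hf : ∀ u v, f u v = f v u) :
    ∑ d : G.Dart, f d.fst d.snd = 2 * ∑ e ∈ G.edgeFinset, Sym2.lift ⟨f, hf⟩ e := by
  have h1 : ∑ d : G.Dart, f d.fst d.snd
      = ∑ e ∈ G.edgeFinset, ∑ d ∈ Finset.univ.filter (fun d : G.Dart => d.edge = e),
          f d.fst d.snd :=
    (Finset.sum_fiberwise_of_maps_to (fun d _ => by rw [mem_edgeFinset]; exact d.edge_mem) _).symm
  rw [h1, Finset.mul_sum]
  apply Finset.sum_congr rfl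
  intro e he
  rw [mem_edgeFinset] at he
  induction e with
  | _ u v =>
    let d : G.Dart := ⟨(u, v), he⟩
    have : ({d' : G.Dart | d'.edge = s(u, v)} : Finset _) = {d, d.symm} := d.edge_fiber
    rw [show (Finset.univ.filter fun d' : G.Dart => d'.edge = s(u, v)) = {d, d.symm} from this,
      Finset.sum_insert (by simp [d.symm_ne.symm]), Finset.sum_singleton]
    simp only [Sym2.lift_mk, SimpleGraph.Dart.symm_toProd]
    show f u v + f v u = 2 * f u v
    rw [hf v u]; ring

lemma aux_dart_fst_sum (h : V → ℝ) :
    ∑ d : G.Dart, h d.fst = ∑ v, (G.degree v : ℝ) * h v := by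
  have h1 : ∑ d : G.Dart, h d.fst
      = ∑ v, ∑ d ∈ Finset.univ.filter (fun d : G.Dart => d.fst = v), h d.fst :=
    (Finset.sum_fiberwise_of_maps_to (fun d _ => mem_univ _) _).symm
  rw [h1]
  apply Finset.sum_congr rfl
  intro v _
  rw [Finset.sum_congr rfl (fun d hd => by rw [(Finset.mem_filter.1 hd).2]),
    Finset.sum_const, G.dart_fst_fiber_card_eq_degree, nsmul_eq_mul]

lemma aux_dart_snd_sum (h : V → ℝ) :
    ∑ d : G.Dart, h d.snd = ∑ v, (G.degree v : ℝ) * h v := by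
  rw [← aux_dart_fst_sum G h]
  exact Fintype.sum_equiv (Function.Involutive.toPerm _ SimpleGraph.Dart.symm_involutive)
    _ _ (fun d => rfl)

lemma aux_amhm {a b : ℝ} (ha : 0 < a) (hb : 0 < b) :
    2 / (a + b) ≤ 1 / (2 * a) + 1 / (2 * b) := by
  rw [div_add_div _ _ (by positivity) (by positivity),
    div_le_div_iff₀ (by positivity) (by positivity)]
  nlinarith [sq_nonneg (a - b)]

lemma aux_amhm_eq {a b : ℝ} (ha : 0 < a) (hb : 0 < b) :
    2 / (a + b) = 1 / (2 * a) + 1 / (2 * b) ↔ a = b := by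
  constructor
  · intro h
    field_simp at h
    nlinarith [sq_nonneg (a - b)]
  · rintro rfl
    field_simp
    ring

lemma aux_comp_reg :
    (∀ u v, G.Adj u v → G.degree u = G.degree v) ↔
    (∀ c : G.ConnectedComponent, ∃ r : ℕ, ∀ v : V,
        G.connectedComponentMk v = c → G.degree v = r) := by
  constructor
  · intro h c
    have walk_deg : ∀ {a b : V}, G.Walk a b → G.degree a = G.degree b := by
      intro a b p
      induction p with
      | nil => rfl
      | cons hadj _ ih => exact (h _ _ hadj).trans ih
    obtain ⟨w, hw⟩ := c.exists_rep
    refine ⟨G.degree w, fun v hv => ?_⟩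
    have hr : G.Reachable v w := (ConnectedComponent.eq).1 (hv.trans hw.symm)
    obtain ⟨p⟩ := hr
    exact walk_deg p
  · intro h u v hadj
    obtain ⟨r, hr⟩ := h (G.connectedComponentMk u)
    rw [hr u rfl, hr v (by rw [ConnectedComponent.eq]; exact hadj.symm.reachable)]

end Aux

noncomputable def harmonicIndex {V : Type*} [Fintype V] [DecidableEq V]
    (G : SimpleGraph V) [DecidableRel G.Adj] : ℝ :=
  ∑ e ∈ G.edgeFinset,
    Sym2.lift ⟨fun u v => 2 / ((G.degree u : ℝ) + (G.degree v : ℝ)),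
      fun u v => by dsimp only; rw [add_comm ((G.degree u : ℝ))]⟩ e

theorem stmt8 {V : Type*} [Fintype V] [DecidableEq V] (G : SimpleGraph V)
    [DecidableRel G.Adj] (hdeg : ∀ v : V, 1 ≤ G.degree v) :
    harmonicIndex G ≤ (Fintype.card V : ℝ) / 2 ∧
    (harmonicIndex G = (Fintype.card V : ℝ) / 2 ↔
      ∀ c : G.ConnectedComponent, ∃ r : ℕ, ∀ v : V,
        G.connectedComponentMk v = c → G.degree v = r) := by
  have hpos : ∀ v : V, (0 : ℝ) < G.degree v := fun v => by
    exact_mod_cast Nat.lt_of_lt_of_le Nat.zero_lt_one (hdeg v)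
  have hH : ∑ d : G.Dart, 2 / ((G.degree d.fst : ℝ) + (G.degree d.snd : ℝ))
      = 2 * harmonicIndex G :=
    aux_dart_sum G (fun u v => 2 / ((G.degree u : ℝ) + (G.degree v : ℝ)))
      (fun u v => by rw [add_comm ((G.degree u : ℝ))])
  have hhalf : ∑ v : V, (G.degree v : ℝ) * (1 / (2 * (G.degree v : ℝ)))
      = (Fintype.card V : ℝ) / 2 := by
    have h1 : ∀ v : V, (G.degree v : ℝ) * (1 / (2 * (G.degree v : ℝ))) = 1 / 2 := fun v => by
      have h2 := (hpos v).ne'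
      field_simp
    rw [Finset.sum_congr rfl (fun v _ => h1 v), Finset.sum_const, Finset.card_univ,
      nsmul_eq_mul]
    ring
  have hR : ∑ d : G.Dart,
      (1 / (2 * (G.degree d.fst : ℝ)) + 1 / (2 * (G.degree d.snd : ℝ)))
      = (Fintype.card V : ℝ) := by
    rw [Finset.sum_add_distrib,
      aux_dart_fst_sum G (fun v => 1 / (2 * (G.degree v : ℝ))),
      aux_dart_snd_sum G (fun v => 1 / (2 * (G.degree v : ℝ))), hhalf]
    ring
  have hle : ∀ d : G.Dart,
      2 / ((G.degree d.fst : ℝ) + (G.degree d.snd : ℝ))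
        ≤ 1 / (2 * (G.degree d.fst : ℝ)) + 1 / (2 * (G.degree d.snd : ℝ)) :=
    fun d => aux_amhm (hpos _) (hpos _)
  have hsum_le : ∑ d : G.Dart, 2 / ((G.degree d.fst : ℝ) + (G.degree d.snd : ℝ))
      ≤ ∑ d : G.Dart,
        (1 / (2 * (G.degree d.fst : ℝ)) + 1 / (2 * (G.degree d.snd : ℝ))) :=
    Finset.sum_le_sum (fun d _ => hle d)
  constructor
  · linarith [hH, hR, hsum_le]
  · have key : harmonicIndex G = (Fintype.card V : ℝ) / 2 ↔
        ∀ d ∈ (Finset.univ : Finset G.Dart),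
          2 / ((G.degree d.fst : ℝ) + (G.degree d.snd : ℝ))
            = 1 / (2 * (G.degree d.fst : ℝ)) + 1 / (2 * (G.degree d.snd : ℝ)) := by
      rw [← Finset.sum_eq_sum_iff_of_le (fun d _ => hle d)]
      constructor
      · intro h; linarith [hH, hR]
      · intro h; linarith [hH, hR]
    have key2 : (∀ d ∈ (Finset.univ : Finset G.Dart),
          2 / ((G.degree d.fst : ℝ) + (G.degree d.snd : ℝ))
            = 1 / (2 * (G.degree d.fst : ℝ)) + 1 / (2 * (G.degree d.snd : ℝ))) ↔
        ∀ u v, G.Adj u v → G.degree u = G.degree v := by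
      constructor
      · intro h u v hadj
        exact_mod_cast (aux_amhm_eq (hpos u) (hpos v)).1 (h ⟨(u, v), hadj⟩ (Finset.mem_univ _))
      · intro h d _
        exact (aux_amhm_eq (hpos _) (hpos _)).2 (by exact_mod_cast h _ _ d.adj)
    exact key.trans (key2.trans (aux_comp_reg G))
end
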